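/- Let V : [0,∞) → ℝ be a right-continuous function with left limits, of finite variation on every compact interval. Let t > 0 and let x be a simple level for V with x ≠ V(0) and x ≠ V(t). Then 1_{[x,∞)}(V(t)) = 1_{[x,∞)}(V(0)) + ℓ^x(t) + Σ_{0<s≤t} ( 1_{[x,∞)}(V(s)) − 1_{[x,∞)}(V(s−)) ), where the sum has only finitely many nonzero terms. -/

import Mathlib

open MeasureTheory Set Filter
open scoped ENNReal NNReal

noncomputable section

/-- `V` increases through the level `x` at time `t`: `t > 0`, `V t = x`, `V` is continuous
at `t` (within the domain `[0,∞)`), and `V s - V t` has the same sign as `s - t` for all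
`s ≥ 0` in some neighborhood of `t`. -/
def IncreasesThrough (V : ℝ → ℝ) (x t : ℝ) : Prop :=
  0 < t ∧ V t = x ∧ ContinuousWithinAt V (Set.Ici 0) t ∧
    ∃ ε > 0, ∀ s ∈ Set.Ici (0 : ℝ), |s - t| < ε →
      ((s < t → V s < V t) ∧ (t < s → V t < V s))

/-- `V` decreases through the level `x` at time `t` iff `-V` increases through `-x` at `t`. -/
def DecreasesThrough (V : ℝ → ℝ) (x t : ℝ) : Prop :=
  IncreasesThrough (fun s => -V s) (-x) t

/-- `(0,t] ∩ ℐ(x)`: the increasing passage times of `V` through `x` up to time `t`. -/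
def incSet (V : ℝ → ℝ) (x t : ℝ) : Set ℝ :=
  {s | s ∈ Set.Ioc 0 t ∧ IncreasesThrough V x s}

/-- `(0,t] ∩ 𝒟(x)`: the decreasing passage times of `V` through `x` up to time `t`. -/
def decSet (V : ℝ → ℝ) (x t : ℝ) : Set ℝ :=
  {s | s ∈ Set.Ioc 0 t ∧ DecreasesThrough V x s}

/-- The signed local time `ℓ^x(t) = Card((0,t] ∩ ℐ(x)) − Card((0,t] ∩ 𝒟(x))`
(meaningful when both sets are finite). -/
def signedLocalTime (V : ℝ → ℝ) (x t : ℝ) : ℤ :=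
  ((incSet V x t).ncard : ℤ) - ((decSet V x t).ncard : ℤ)

/-- The absolute local time `λ^x(t) = Card((0,t] ∩ ℐ(x)) + Card((0,t] ∩ 𝒟(x))`
(meaningful when both sets are finite). -/
def absLocalTime (V : ℝ → ℝ) (x t : ℝ) : ℕ :=
  (incSet V x t).ncard + (decSet V x t).ncard

/-- `x` is a *simple level* for `V` (with left limits `Vm`): the set
`{t > 0 : V(t−) < x < V(t) or V(t) < x < V(t−) or V(t) = x}` has no accumulation point in
`[0,∞)` (it is discrete), and no jump of `V` starts or ends at `x`. -/
def SimpleLevel (V Vm : ℝ → ℝ) (x : ℝ) : Prop :=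
  (∀ a : ℝ, 0 ≤ a →
      ¬ AccPt a (Filter.principal
        {u : ℝ | 0 < u ∧ ((Vm u < x ∧ x < V u) ∨ (V u < x ∧ x < Vm u) ∨ V u = x)})) ∧
  {u : ℝ | 0 < u ∧ V u ≠ Vm u ∧ (x = V u ∨ x = Vm u)} = ∅

open scoped Topology

namespace Tanaka

/-- The level set of `x`. -/
def SS (V Vm : ℝ → ℝ) (x : ℝ) : Set ℝ :=
  {u : ℝ | 0 < u ∧ ((Vm u < x ∧ x < V u) ∨ (V u < x ∧ x < Vm u) ∨ V u = x)}

def fI (x : ℝ) : ℝ → ℝ := (Set.Ici x).indicator fun _ => (1 : ℝ)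

lemma fI_of_le {x y : ℝ} (h : x ≤ y) : fI x y = 1 := Set.indicator_of_mem h _

lemma fI_of_lt {x y : ℝ} (h : y < x) : fI x y = 0 :=
  Set.indicator_of_notMem (by simpa using not_le.2 h) _

lemma inc_mem_SS {V Vm : ℝ → ℝ} {x s : ℝ} (h : IncreasesThrough V x s) : s ∈ SS V Vm x :=
  ⟨h.1, Or.inr (Or.inr h.2.1)⟩

lemma dec_mem_SS {V Vm : ℝ → ℝ} {x s : ℝ} (h : DecreasesThrough V x s) : s ∈ SS V Vm x := by
  refine ⟨h.1, Or.inr (Or.inr ?_)⟩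
  have h2 := h.2.1
  simp only [neg_inj] at h2
  exact h2

lemma cross_up {V Vm : ℝ → ℝ} {x : ℝ}
    (hV_rc : ∀ s ∈ Set.Ici (0 : ℝ), ContinuousWithinAt V (Set.Ici s) s)
    (hV_ll : ∀ s ∈ Set.Ioi (0 : ℝ), Tendsto V (𝓝[<] s) (𝓝 (Vm s)))
    (hjump : {u : ℝ | 0 < u ∧ V u ≠ Vm u ∧ (x = V u ∨ x = Vm u)} = ∅)
    {a b : ℝ} (ha : 0 ≤ a) (hab : a < b) (h1 : V a < x) (h2 : x ≤ V b) :
    ∃ u ∈ Set.Ioc a b, u ∈ SS V Vm x := by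
  set A : Set ℝ := {s | s ∈ Set.Icc a b ∧ x ≤ V s} with hA
  have hbA : b ∈ A := ⟨⟨hab.le, le_rfl⟩, h2⟩
  have hne : A.Nonempty := ⟨b, hbA⟩
  have hbdd : BddBelow A := ⟨a, fun s hs => hs.1.1⟩
  set u := sInf A with hu
  have hub : u ≤ b := csInf_le hbdd hbA
  have hau_le : a ≤ u := le_csInf hne fun s hs => hs.1.1
  have hgt : a < u := by
    have hev : ∀ᶠ s in 𝓝[≥] a, V s < x := (hV_rc a ha).eventually_lt_const h1
    obtain ⟨d, hd, hIco⟩ := mem_nhdsGE_iff_exists_Ico_subset.1 hev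
    have hd' : ∀ s ∈ A, d ≤ s := by
      intro s hs
      by_contra hc
      push_neg at hc
      exact absurd hs.2 (not_le.2 (hIco ⟨hs.1.1, hc⟩))
    exact lt_of_lt_of_le hd (le_csInf hne hd')
  have h0u : 0 ≤ u := ha.trans hau_le
  have hxu : x ≤ V u := by
    by_contra h
    push_neg at h
    have hev : ∀ᶠ s in 𝓝[≥] u, V s < x := (hV_rc u h0u).eventually_lt_const h
    obtain ⟨d, hd, hIco⟩ := mem_nhdsGE_iff_exists_Ico_subset.1 hev
    obtain ⟨s, hsA, hs⟩ := Real.lt_sInf_add_pos hne (show (0:ℝ) < d - u by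
      have := hd; simp only [Set.mem_Ioi] at this; linarith)
    have hus : u ≤ s := csInf_le hbdd hsA
    have : V s < x := hIco ⟨hus, by rw [← hu] at hs; linarith⟩
    exact absurd hsA.2 (not_le.2 this)
  have hvmu : Vm u ≤ x := by
    have h0u' : u ∈ Set.Ioi (0 : ℝ) := lt_of_le_of_lt ha hgt
    have hev : ∀ᶠ s in 𝓝[<] u, V s ≤ x := by
      filter_upwards [Ioo_mem_nhdsLT_of_mem (show u ∈ Set.Ioc a u from ⟨hgt, le_rfl⟩)] with s hs
      by_contra hc
      push_neg at hc
      have hsA : s ∈ A := ⟨⟨hs.1.le, hs.2.le.trans hub⟩, hc.le⟩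
      exact absurd (csInf_le hbdd hsA) (not_le.2 hs.2)
    exact le_of_tendsto (hV_ll u h0u') hev
  refine ⟨u, ⟨hgt, hub⟩, lt_of_le_of_lt ha hgt, ?_⟩
  rcases eq_or_lt_of_le hxu with heq | hlt
  · exact Or.inr (Or.inr heq.symm)
  rcases lt_or_eq_of_le hvmu with hvm | hvm
  · exact Or.inl ⟨hvm, hlt⟩
  · exfalso
    have hmem : u ∈ {u : ℝ | 0 < u ∧ V u ≠ Vm u ∧ (x = V u ∨ x = Vm u)} := by
      refine ⟨lt_of_le_of_lt ha hgt, ?_, Or.inr hvm.symm⟩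
      rw [hvm]
      exact fun h => absurd h.symm (ne_of_lt hlt)
    rw [hjump] at hmem
    exact hmem

lemma SS_neg (V Vm : ℝ → ℝ) (x : ℝ) :
    SS (fun s => -V s) (fun s => -Vm s) (-x) = SS V Vm x := by
  ext u
  simp only [SS, Set.mem_setOf_eq, neg_lt_neg_iff, neg_inj]
  tauto

lemma cross_down {V Vm : ℝ → ℝ} {x : ℝ}
    (hV_rc : ∀ s ∈ Set.Ici (0 : ℝ), ContinuousWithinAt V (Set.Ici s) s)
    (hV_ll : ∀ s ∈ Set.Ioi (0 : ℝ), Tendsto V (𝓝[<] s) (𝓝 (Vm s)))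
    (hjump : {u : ℝ | 0 < u ∧ V u ≠ Vm u ∧ (x = V u ∨ x = Vm u)} = ∅)
    {a b : ℝ} (ha : 0 ≤ a) (hab : a < b) (h1 : x < V a) (h2 : V b ≤ x) :
    ∃ u ∈ Set.Ioc a b, u ∈ SS V Vm x := by
  have hjump' : {u : ℝ | 0 < u ∧ (fun s => -V s) u ≠ (fun s => -Vm s) u ∧
      (-x = (fun s => -V s) u ∨ -x = (fun s => -Vm s) u)} = ∅ := by
    rw [← hjump]
    ext u
    simp only [Set.mem_setOf_eq, ne_eq, neg_inj, neg_eq_iff_eq_neg, neg_neg]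
  have := cross_up (V := fun s => -V s) (Vm := fun s => -Vm s) (x := -x)
    (fun s hs => (hV_rc s hs).neg) (fun s hs => (hV_ll s hs).neg)
    hjump' ha hab (by simpa using h1) (by simpa using h2)
  simpa [SS_neg] using this

lemma no_cross_iff {V Vm : ℝ → ℝ} {x : ℝ}
    (hV_rc : ∀ s ∈ Set.Ici (0 : ℝ), ContinuousWithinAt V (Set.Ici s) s)
    (hV_ll : ∀ s ∈ Set.Ioi (0 : ℝ), Tendsto V (𝓝[<] s) (𝓝 (Vm s)))
    (hjump : {u : ℝ | 0 < u ∧ V u ≠ Vm u ∧ (x = V u ∨ x = Vm u)} = ∅)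
    {a b : ℝ} (ha : 0 ≤ a) (hab : a ≤ b) (hVa : V a ≠ x)
    (hS : SS V Vm x ∩ Set.Ioc a b = ∅) : (x ≤ V b ↔ x ≤ V a) := by
  rcases eq_or_lt_of_le hab with rfl | h
  · exact Iff.rfl
  rcases lt_or_ge (V a) x with hlt | hge
  · have hnb : ¬ x ≤ V b := by
      intro h2
      obtain ⟨u, hu1, hu2⟩ := cross_up hV_rc hV_ll hjump ha h hlt h2
      have : u ∈ SS V Vm x ∩ Set.Ioc a b := ⟨hu2, hu1⟩
      rw [hS] at this
      exact this
    simp [hnb, not_le.2 hlt]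
  · have hx : x < V a := lt_of_le_of_ne hge (Ne.symm hVa)
    have hb : x ≤ V b := by
      by_contra h2
      push_neg at h2
      obtain ⟨u, hu1, hu2⟩ := cross_down hV_rc hV_ll hjump ha h hx h2.le
      have : u ∈ SS V Vm x ∩ Set.Ioc a b := ⟨hu2, hu1⟩
      rw [hS] at this
      exact this
    simp [hb, hge]

lemma step {V Vm : ℝ → ℝ} {x : ℝ}
    (hV_rc : ∀ s ∈ Set.Ici (0 : ℝ), ContinuousWithinAt V (Set.Ici s) s)
    (hV_ll : ∀ s ∈ Set.Ioi (0 : ℝ), Tendsto V (𝓝[<] s) (𝓝 (Vm s)))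
    (hjump : {u : ℝ | 0 < u ∧ V u ≠ Vm u ∧ (x = V u ∨ x = Vm u)} = ∅)
    {c u b : ℝ} (hc0 : 0 ≤ c) (hcu : c < u) (hub : u ≤ b)
    (huS : u ∈ SS V Vm x) (hS : SS V Vm x ∩ Set.Ioc c b = {u})
    (hVc : V c ≠ x) (hVb : V b ≠ x) :
    fI x (V b) = fI x (V c)
      + (({s | s ∈ Set.Ioc c b ∧ IncreasesThrough V x s}).ncard : ℝ)
      - (({s | s ∈ Set.Ioc c b ∧ DecreasesThrough V x s}).ncard : ℝ)
      + (fI x (V u) - fI x (Vm u)) := by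
  have h0u : 0 < u := lt_of_le_of_lt hc0 hcu
  have hmemS : ∀ s, s ∈ SS V Vm x → s ∈ Set.Ioc c b → s = u := by
    intro s h1 h2
    have : s ∈ ({u} : Set ℝ) := hS ▸ Set.mem_inter h1 h2
    exact this
  have hne_x : ∀ s ∈ Set.Ioc c b, s ≠ u → V s ≠ x := by
    intro s hs hsu hVs
    exact hsu (hmemS s ⟨lt_of_le_of_lt hc0 hs.1, Or.inr (Or.inr hVs)⟩ hs)
  -- constancy on the left of u
  have hleft : ∀ s ∈ Set.Ico c u, (x ≤ V s ↔ x ≤ V c) := by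
    intro s hs
    rcases eq_or_lt_of_le hs.1 with heq | hcs
    · rw [← heq]
    apply no_cross_iff hV_rc hV_ll hjump hc0 hcs.le hVc
    apply Set.eq_empty_iff_forall_notMem.2
    rintro v ⟨hv1, hv2⟩
    have hvu : v = u := hmemS v hv1 ⟨hv2.1, hv2.2.trans (hs.2.le.trans hub)⟩
    rw [hvu] at hv2
    exact absurd (hv2.2.trans_lt hs.2) (lt_irrefl u)
  have hleftne : ∀ s ∈ Set.Ico c u, V s ≠ x := by
    intro s hs
    rcases eq_or_lt_of_le hs.1 with heq | hcs
    · rw [← heq]; exact hVc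
    · exact hne_x s ⟨hcs, hs.2.le.trans hub⟩ (ne_of_lt hs.2)
  -- constancy on the right of u
  have hright : ∀ s ∈ Set.Ioc u b, (x ≤ V s ↔ x ≤ V b) := by
    intro s hs
    rcases eq_or_lt_of_le hs.2 with heq | hsb
    · rw [heq]
    have hVs : V s ≠ x := hne_x s ⟨hcu.trans hs.1, hs.2⟩ (ne_of_gt hs.1)
    refine (no_cross_iff hV_rc hV_ll hjump (le_of_lt (h0u.trans hs.1)) hsb.le hVs ?_).symm
    apply Set.eq_empty_iff_forall_notMem.2
    rintro v ⟨hv1, hv2⟩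
    have hvu : v = u := hmemS v hv1 ⟨hcu.trans (hs.1.trans hv2.1), hv2.2⟩
    rw [hvu] at hv2
    exact absurd (hs.1.trans hv2.1) (lt_irrefl u)
  have hrightne : ∀ s ∈ Set.Ioc u b, V s ≠ x := by
    intro s hs
    rcases eq_or_lt_of_le hs.2 with heq | hsb
    · rw [heq]; exact hVb
    · exact hne_x s ⟨hcu.trans hs.1, hs.2⟩ (ne_of_gt hs.1)
  -- inc/dec sets
  have hinc_sub : ∀ s, s ∈ Set.Ioc c b → IncreasesThrough V x s → s = u := by
    intro s hs hI
    exact hmemS s (inc_mem_SS hI) hs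
  have hdec_sub : ∀ s, s ∈ Set.Ioc c b → DecreasesThrough V x s → s = u := by
    intro s hs hD
    exact hmemS s (dec_mem_SS hD) hs
  have hIncSet1 : IncreasesThrough V x u →
      {s | s ∈ Set.Ioc c b ∧ IncreasesThrough V x s} = {u} := by
    intro h
    ext s
    simp only [Set.mem_setOf_eq, Set.mem_singleton_iff]
    constructor
    · rintro ⟨h1, h2⟩; exact hinc_sub s h1 h2
    · rintro rfl; exact ⟨⟨hcu, hub⟩, h⟩
  have hIncSet0 : ¬ IncreasesThrough V x u →
      {s | s ∈ Set.Ioc c b ∧ IncreasesThrough V x s} = ∅ := by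
    intro h
    apply Set.eq_empty_iff_forall_notMem.2
    rintro s ⟨h1, h2⟩
    exact h ((hinc_sub s h1 h2) ▸ h2)
  have hDecSet1 : DecreasesThrough V x u →
      {s | s ∈ Set.Ioc c b ∧ DecreasesThrough V x s} = {u} := by
    intro h
    ext s
    simp only [Set.mem_setOf_eq, Set.mem_singleton_iff]
    constructor
    · rintro ⟨h1, h2⟩; exact hdec_sub s h1 h2
    · rintro rfl; exact ⟨⟨hcu, hub⟩, h⟩
  have hDecSet0 : ¬ DecreasesThrough V x u →
      {s | s ∈ Set.Ioc c b ∧ DecreasesThrough V x s} = ∅ := by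
    intro h
    apply Set.eq_empty_iff_forall_notMem.2
    rintro s ⟨h1, h2⟩
    exact h ((hdec_sub s h1 h2) ▸ h2)
  -- picking witnesses
  have pick_left : ∀ ε > (0:ℝ), ∃ s, s ∈ Set.Ico c u ∧ 0 ≤ s ∧ |s - u| < ε ∧ s < u := by
    intro ε hε
    have hlt : max c (u - ε) < u := max_lt hcu (by linarith)
    obtain ⟨s, hs1, hs2⟩ := exists_between hlt
    have hcs : c < s := (le_max_left _ _).trans_lt hs1
    have hes : u - ε < s := (le_max_right _ _).trans_lt hs1
    exact ⟨s, ⟨hcs.le, hs2⟩, hc0.trans hcs.le, by rw [abs_lt]; constructor <;> linarith, hs2⟩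
  have pick_right : u < b → ∀ ε > (0:ℝ), ∃ s, s ∈ Set.Ioc u b ∧ 0 ≤ s ∧ |s - u| < ε ∧ u < s := by
    intro hub' ε hε
    have hlt : u < min b (u + ε) := lt_min hub' (by linarith)
    obtain ⟨s, hs1, hs2⟩ := exists_between hlt
    have hsb : s < b := hs2.trans_le (min_le_left _ _)
    have hse : s < u + ε := hs2.trans_le (min_le_right _ _)
    exact ⟨s, ⟨hs1, hsb.le⟩, (h0u.trans hs1).le, by rw [abs_lt]; constructor <;> linarith, hs1⟩
  obtain ⟨h0u', hcase⟩ := huS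
  rcases hcase with ⟨hjm1, hjm2⟩ | ⟨hjm1, hjm2⟩ | hVu
  · -- upward jump : Vm u < x < V u
    have hIncE := hIncSet0 (fun h => absurd h.2.1 (ne_of_gt hjm2))
    have hDecE := hDecSet0 (fun h => by
      have := h.2.1
      simp only [neg_inj] at this
      exact absurd this (ne_of_gt hjm2))
    have hrb : x ≤ V b := by
      have hev : ∀ᶠ s in 𝓝[≥] u, x < V s := (hV_rc u h0u.le).eventually_const_lt hjm2
      rcases eq_or_lt_of_le hub with heq | hub'
      · rw [← heq]; exact hjm2.le
      obtain ⟨d, hd, hIco⟩ := mem_nhdsGE_iff_exists_Ico_subset.1 hev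
      simp only [Set.mem_Ioi] at hd
      set s := min ((u + d) / 2) ((u + b) / 2) with hsdef
      have hus : u < s := lt_min (by linarith) (by linarith)
      have hsd : s < d := (min_le_left _ _).trans_lt (by linarith)
      have hsb : s < b := (min_le_right _ _).trans_lt (by linarith)
      have hxs : x < V s := hIco ⟨hus.le, hsd⟩
      exact (hright s ⟨hus, hsb.le⟩).1 hxs.le
    have hlc : ¬ x ≤ V c := by
      have hev : ∀ᶠ s in 𝓝[<] u, V s < x := (hV_ll u h0u').eventually_lt_const hjm1
      have hev2 : ∀ᶠ s in 𝓝[<] u, s ∈ Set.Ioo c u :=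
        Ioo_mem_nhdsLT_of_mem ⟨hcu, le_rfl⟩
      obtain ⟨s, hs1, hs2⟩ := (hev.and hev2).exists
      intro hxc
      exact absurd ((hleft s ⟨hs2.1.le, hs2.2⟩).2 hxc) (not_le.2 hs1)
    rw [hIncE, hDecE, fI_of_le hrb, fI_of_lt (not_le.1 hlc), fI_of_le hjm2.le, fI_of_lt hjm1]
    simp
  · -- downward jump : V u < x < Vm u
    have hIncE := hIncSet0 (fun h => absurd h.2.1 (ne_of_lt hjm1))
    have hDecE := hDecSet0 (fun h => by
      have := h.2.1
      simp only [neg_inj] at this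
      exact absurd this (ne_of_lt hjm1))
    have hrb : ¬ x ≤ V b := by
      have hev : ∀ᶠ s in 𝓝[≥] u, V s < x := (hV_rc u h0u.le).eventually_lt_const hjm1
      rcases eq_or_lt_of_le hub with heq | hub'
      · rw [← heq]; exact not_le.2 hjm1
      obtain ⟨d, hd, hIco⟩ := mem_nhdsGE_iff_exists_Ico_subset.1 hev
      simp only [Set.mem_Ioi] at hd
      set s := min ((u + d) / 2) ((u + b) / 2) with hsdef
      have hus : u < s := lt_min (by linarith) (by linarith)
      have hsd : s < d := (min_le_left _ _).trans_lt (by linarith)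
      have hsb : s < b := (min_le_right _ _).trans_lt (by linarith)
      have hxs : V s < x := hIco ⟨hus.le, hsd⟩
      intro hxb
      exact absurd ((hright s ⟨hus, hsb.le⟩).2 hxb) (not_le.2 hxs)
    have hlc : x ≤ V c := by
      have hev : ∀ᶠ s in 𝓝[<] u, x < V s := (hV_ll u h0u').eventually_const_lt hjm2
      have hev2 : ∀ᶠ s in 𝓝[<] u, s ∈ Set.Ioo c u :=
        Ioo_mem_nhdsLT_of_mem ⟨hcu, le_rfl⟩
      obtain ⟨s, hs1, hs2⟩ := (hev.and hev2).exists
      exact (hleft s ⟨hs2.1.le, hs2.2⟩).1 hs1.le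
    rw [hIncE, hDecE, fI_of_lt (not_le.1 hrb), fI_of_le hlc, fI_of_lt hjm1, fI_of_le hjm2.le]
    simp
  · -- touch : V u = x
    have hVmu : Vm u = x := by
      by_contra h
      have hmem : u ∈ {u : ℝ | 0 < u ∧ V u ≠ Vm u ∧ (x = V u ∨ x = Vm u)} :=
        ⟨h0u, fun he => h (he ▸ hVu), Or.inl hVu.symm⟩
      rw [hjump] at hmem
      exact hmem
    have hj0 : fI x (V u) - fI x (Vm u) = 0 := by rw [hVu, hVmu, sub_self]
    have hub' : u < b := lt_of_le_of_ne hub (fun h => hVb (h ▸ hVu))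
    have hcont : ContinuousWithinAt V (Set.Ici 0) u := by
      apply ContinuousAt.continuousWithinAt
      rw [ContinuousAt, ← nhdsLT_sup_nhdsGE u, tendsto_sup]
      constructor
      · have := hV_ll u h0u
        rwa [hVmu, ← hVu] at this
      · exact hV_rc u h0u.le
    by_cases hl : x ≤ V c <;> by_cases hr : x ≤ V b
    · -- high / high: no passage
      have hLgt : ∀ s ∈ Set.Ico c u, x < V s := fun s hs =>
        lt_of_le_of_ne ((hleft s hs).2 hl) (Ne.symm (hleftne s hs))
      have hRgt : ∀ s ∈ Set.Ioc u b, x < V s := fun s hs =>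
        lt_of_le_of_ne ((hright s hs).2 hr) (Ne.symm (hrightne s hs))
      have hnI : ¬ IncreasesThrough V x u := by
        rintro ⟨-, -, -, ε, hε, hsign⟩
        obtain ⟨s, hs, h0s, hd, hsu⟩ := pick_left ε hε
        have h1 := (hsign s h0s hd).1 hsu
        rw [hVu] at h1
        exact absurd (hLgt s hs) (not_lt.2 h1.le)
      have hnD : ¬ DecreasesThrough V x u := by
        rintro ⟨-, -, -, ε, hε, hsign⟩
        obtain ⟨s, hs, h0s, hd, hsu⟩ := pick_right hub' ε hε
        have h1 := (hsign s h0s hd).2 hsu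
        simp only [neg_lt_neg_iff] at h1
        rw [hVu] at h1
        exact absurd (hRgt s hs) (not_lt.2 h1.le)
      rw [hIncSet0 hnI, hDecSet0 hnD, fI_of_le hl, fI_of_le hr, hj0]
      simp
    · -- high / low: decrease
      have hLgt : ∀ s ∈ Set.Ico c u, x < V s := fun s hs =>
        lt_of_le_of_ne ((hleft s hs).2 hl) (Ne.symm (hleftne s hs))
      have hRlt : ∀ s ∈ Set.Ioc u b, V s < x := fun s hs =>
        lt_of_le_of_ne (not_le.1 (fun hh => hr ((hright s hs).1 hh))).le (hrightne s hs)
      have hD : DecreasesThrough V x u := by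
        refine ⟨h0u, by simp [hVu], hcont.neg, min (u - c) (b - u),
          lt_min (by linarith) (by linarith), ?_⟩
        intro s h0s hd
        rw [abs_lt] at hd
        have hd1 := hd.1
        have hd2 := hd.2
        have hm1 : min (u - c) (b - u) ≤ u - c := min_le_left _ _
        have hm2 : min (u - c) (b - u) ≤ b - u := min_le_right _ _
        constructor
        · intro hsu
          have : x < V s := hLgt s ⟨by linarith, hsu⟩
          simp only [neg_lt_neg_iff, hVu]
          exact this
        · intro hus
          have : V s < x := hRlt s ⟨hus, by linarith⟩
          simp only [neg_lt_neg_iff, hVu]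
          exact this
      have hnI : ¬ IncreasesThrough V x u := by
        rintro ⟨-, -, -, ε, hε, hsign⟩
        obtain ⟨s, hs, h0s, hd, hsu⟩ := pick_left ε hε
        have h1 := (hsign s h0s hd).1 hsu
        rw [hVu] at h1
        exact absurd (hLgt s hs) (not_lt.2 h1.le)
      rw [hIncSet0 hnI, hDecSet1 hD, fI_of_le hl, fI_of_lt (not_le.1 hr), hj0]
      simp
    · -- low / high: increase
      have hLlt : ∀ s ∈ Set.Ico c u, V s < x := fun s hs =>
        lt_of_le_of_ne (not_le.1 (fun hh => hl ((hleft s hs).1 hh))).le (hleftne s hs)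
      have hRgt : ∀ s ∈ Set.Ioc u b, x < V s := fun s hs =>
        lt_of_le_of_ne ((hright s hs).2 hr) (Ne.symm (hrightne s hs))
      have hI : IncreasesThrough V x u := by
        refine ⟨h0u, hVu, hcont, min (u - c) (b - u),
          lt_min (by linarith) (by linarith), ?_⟩
        intro s h0s hd
        rw [abs_lt] at hd
        have hd1 := hd.1
        have hd2 := hd.2
        have hm1 : min (u - c) (b - u) ≤ u - c := min_le_left _ _
        have hm2 : min (u - c) (b - u) ≤ b - u := min_le_right _ _
        constructor
        · intro hsu
          have : V s < x := hLlt s ⟨by linarith, hsu⟩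
          rwa [hVu]
        · intro hus
          have : x < V s := hRgt s ⟨hus, by linarith⟩
          rwa [hVu]
      have hnD : ¬ DecreasesThrough V x u := by
        rintro ⟨-, -, -, ε, hε, hsign⟩
        obtain ⟨s, hs, h0s, hd, hsu⟩ := pick_right hub' ε hε
        have h1 := (hsign s h0s hd).2 hsu
        simp only [neg_lt_neg_iff] at h1
        rw [hVu] at h1
        exact absurd (hRgt s hs) (not_lt.2 h1.le)
      rw [hIncSet1 hI, hDecSet0 hnD, fI_of_lt (not_le.1 hl), fI_of_le hr, hj0]
      simp
    · -- low / low: no passage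
      have hLlt : ∀ s ∈ Set.Ico c u, V s < x := fun s hs =>
        lt_of_le_of_ne (not_le.1 (fun hh => hl ((hleft s hs).1 hh))).le (hleftne s hs)
      have hRlt : ∀ s ∈ Set.Ioc u b, V s < x := fun s hs =>
        lt_of_le_of_ne (not_le.1 (fun hh => hr ((hright s hs).1 hh))).le (hrightne s hs)
      have hnI : ¬ IncreasesThrough V x u := by
        rintro ⟨-, -, -, ε, hε, hsign⟩
        obtain ⟨s, hs, h0s, hd, hsu⟩ := pick_right hub' ε hε
        have h1 := (hsign s h0s hd).2 hsu
        rw [hVu] at h1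
        exact absurd (hRlt s hs) (not_lt.2 h1.le)
      have hnD : ¬ DecreasesThrough V x u := by
        rintro ⟨-, -, -, ε, hε, hsign⟩
        obtain ⟨s, hs, h0s, hd, hsu⟩ := pick_left ε hε
        have h1 := (hsign s h0s hd).1 hsu
        simp only [neg_lt_neg_iff] at h1
        rw [hVu] at h1
        exact absurd (hLlt s hs) (not_lt.2 h1.le)
      rw [hIncSet0 hnI, hDecSet0 hnD, fI_of_lt (not_le.1 hl), fI_of_lt (not_le.1 hr), hj0]
      simp

lemma SS_inter_finite {V Vm : ℝ → ℝ} {x : ℝ}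
    (hacc : ∀ a : ℝ, 0 ≤ a → ¬ AccPt a (𝓟 (SS V Vm x))) (a b : ℝ) :
    (SS V Vm x ∩ Set.Ioc a b).Finite := by
  by_contra h
  rw [← Set.not_infinite, not_not] at h
  have hsub : SS V Vm x ∩ Set.Ioc a b ⊆ Set.Icc 0 b := fun v hv => ⟨hv.1.1.le, hv.2.2⟩
  obtain ⟨p, hp, hacc'⟩ := h.exists_accPt_of_subset_isCompact isCompact_Icc hsub
  exact hacc p hp.1 (hacc'.mono (principal_mono.2 Set.inter_subset_left))

lemma main {V Vm : ℝ → ℝ} {x : ℝ}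
    (hV_rc : ∀ s ∈ Set.Ici (0 : ℝ), ContinuousWithinAt V (Set.Ici s) s)
    (hV_ll : ∀ s ∈ Set.Ioi (0 : ℝ), Tendsto V (𝓝[<] s) (𝓝 (Vm s)))
    (hjump : {u : ℝ | 0 < u ∧ V u ≠ Vm u ∧ (x = V u ∨ x = Vm u)} = ∅)
    (hfin : ∀ a b : ℝ, (SS V Vm x ∩ Set.Ioc a b).Finite) :
    ∀ n : ℕ, ∀ a b : ℝ, 0 ≤ a → a ≤ b → V a ≠ x → V b ≠ x →
      (SS V Vm x ∩ Set.Ioc a b).ncard = n →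
      fI x (V b) = fI x (V a)
        + (({s | s ∈ Set.Ioc a b ∧ IncreasesThrough V x s}).ncard : ℝ)
        - (({s | s ∈ Set.Ioc a b ∧ DecreasesThrough V x s}).ncard : ℝ)
        + ∑ᶠ u ∈ SS V Vm x ∩ Set.Ioc a b, (fI x (V u) - fI x (Vm u)) := by
  intro n
  induction n with
  | zero =>
    intro a b ha hab hVa hVb hcard
    have hemp : SS V Vm x ∩ Set.Ioc a b = ∅ := (Set.ncard_eq_zero (hfin a b)).1 hcard
    have hinc : {s | s ∈ Set.Ioc a b ∧ IncreasesThrough V x s} = ∅ := by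
      apply Set.eq_empty_iff_forall_notMem.2
      rintro s ⟨h1, h2⟩
      have : s ∈ SS V Vm x ∩ Set.Ioc a b := ⟨inc_mem_SS h2, h1⟩
      rw [hemp] at this; exact this
    have hdec : {s | s ∈ Set.Ioc a b ∧ DecreasesThrough V x s} = ∅ := by
      apply Set.eq_empty_iff_forall_notMem.2
      rintro s ⟨h1, h2⟩
      have : s ∈ SS V Vm x ∩ Set.Ioc a b := ⟨dec_mem_SS h2, h1⟩
      rw [hemp] at this; exact this
    have hiff := no_cross_iff hV_rc hV_ll hjump ha hab hVa hemp
    rw [hemp, hinc, hdec, finsum_mem_empty]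
    simp only [Set.ncard_empty, Nat.cast_zero]
    by_cases h : x ≤ V a
    · rw [fI_of_le h, fI_of_le (hiff.2 h)]; ring
    · rw [fI_of_lt (not_le.1 h), fI_of_lt (not_le.1 (fun hh => h (hiff.1 hh)))]; ring
  | succ n IH =>
    intro a b ha hab hVa hVb hcard
    have hFfin := hfin a b
    have hFne : (SS V Vm x ∩ Set.Ioc a b).Nonempty :=
      Set.nonempty_of_ncard_ne_zero (by rw [hcard]; simp)
    set Fs := hFfin.toFinset with hFs
    have hFsne : Fs.Nonempty := by rwa [Set.Finite.toFinset_nonempty]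
    set u := Fs.max' hFsne with hu
    have huF : u ∈ SS V Vm x ∩ Set.Ioc a b := by
      have := Fs.max'_mem hFsne
      rwa [Set.Finite.mem_toFinset] at this
    have hmax : ∀ v ∈ SS V Vm x ∩ Set.Ioc a b, v ≤ u := fun v hv =>
      Fs.le_max' v (by rwa [Set.Finite.mem_toFinset])
    have hua : a < u := huF.2.1
    have hub : u ≤ b := huF.2.2
    set T := insert a (Fs.erase u) with hT
    have haT : a ∈ T := Finset.mem_insert_self _ _
    have hTne : T.Nonempty := ⟨a, haT⟩
    set m := T.max' hTne with hm
    have hmu : m < u := by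
      have key : ∀ v ∈ T, v < u := by
        intro v hv
        rcases Finset.mem_insert.1 hv with rfl | hv'
        · exact hua
        · have hvu := Finset.ne_of_mem_erase hv'
          have hvF : v ∈ SS V Vm x ∩ Set.Ioc a b := by
            rw [← Set.Finite.mem_toFinset hFfin]
            exact Finset.mem_of_mem_erase hv'
          exact lt_of_le_of_ne (hmax v hvF) hvu
      exact key m (T.max'_mem hTne)
    have ham : a ≤ m := T.le_max' a haT
    set c := (m + u) / 2 with hc
    have hmc : m < c := by rw [hc]; linarith
    have hcu : c < u := by rw [hc]; linarith
    have hac : a < c := lt_of_le_of_lt ham hmc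
    have hc0 : 0 ≤ c := le_of_lt (lt_of_le_of_lt ha hac)
    have hcb : c ≤ b := le_of_lt (lt_of_lt_of_le hcu hub)
    have hcS : c ∉ SS V Vm x := by
      intro hcS
      have hcF : c ∈ SS V Vm x ∩ Set.Ioc a b := ⟨hcS, hac, hcb⟩
      have hcT : c ∈ T := Finset.mem_insert_of_mem
        (Finset.mem_erase.2 ⟨ne_of_lt hcu, (Set.Finite.mem_toFinset hFfin).2 hcF⟩)
      exact absurd (T.le_max' c hcT) (not_le.2 hmc)
    have hVc : V c ≠ x := fun h => hcS ⟨lt_of_le_of_lt ha hac, Or.inr (Or.inr h)⟩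
    have hSac : SS V Vm x ∩ Set.Ioc a c = (SS V Vm x ∩ Set.Ioc a b) \ {u} := by
      ext v
      constructor
      · rintro ⟨hv1, hv2⟩
        refine ⟨⟨hv1, hv2.1, hv2.2.trans hcb⟩, ?_⟩
        simp only [Set.mem_singleton_iff]
        intro h
        rw [h] at hv2
        exact absurd hv2.2 (not_le.2 hcu)
      · rintro ⟨⟨hv1, hv2⟩, hvu⟩
        simp only [Set.mem_singleton_iff] at hvu
        have hvT : v ∈ T := Finset.mem_insert_of_mem
          (Finset.mem_erase.2 ⟨hvu, (Set.Finite.mem_toFinset hFfin).2 ⟨hv1, hv2⟩⟩)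
        exact ⟨hv1, hv2.1, (T.le_max' v hvT).trans hmc.le⟩
    have hScb : SS V Vm x ∩ Set.Ioc c b = {u} := by
      ext v
      simp only [Set.mem_singleton_iff]
      constructor
      · rintro ⟨hv1, hv2⟩
        by_contra hvu
        have hvF : v ∈ SS V Vm x ∩ Set.Ioc a b := ⟨hv1, hac.trans hv2.1, hv2.2⟩
        have hvT : v ∈ T := Finset.mem_insert_of_mem
          (Finset.mem_erase.2 ⟨hvu, (Set.Finite.mem_toFinset hFfin).2 hvF⟩)
        exact absurd (hv2.1) (not_lt.2 ((T.le_max' v hvT).trans hmc.le))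
      · rintro rfl
        exact ⟨huF.1, hcu, hub⟩
    have hcard' : (SS V Vm x ∩ Set.Ioc a c).ncard = n := by
      rw [hSac, Set.ncard_diff_singleton_of_mem huF, hcard]
      simp
    have IH' := IH a c ha hac.le hVa hVc hcard'
    have hstep := step hV_rc hV_ll hjump hc0 hcu hub huF.1 hScb hVc hVb
    -- split of Ioc
    have hIocSplit : Set.Ioc a b = Set.Ioc a c ∪ Set.Ioc c b :=
      (Set.Ioc_union_Ioc_eq_Ioc hac.le hcb).symm
    -- inc count additivity
    have hincsplit : {s | s ∈ Set.Ioc a b ∧ IncreasesThrough V x s} =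
        {s | s ∈ Set.Ioc a c ∧ IncreasesThrough V x s} ∪
        {s | s ∈ Set.Ioc c b ∧ IncreasesThrough V x s} := by
      ext s
      rw [hIocSplit]
      simp only [Set.mem_setOf_eq, Set.mem_union]
      tauto
    have hdecsplit : {s | s ∈ Set.Ioc a b ∧ DecreasesThrough V x s} =
        {s | s ∈ Set.Ioc a c ∧ DecreasesThrough V x s} ∪
        {s | s ∈ Set.Ioc c b ∧ DecreasesThrough V x s} := by
      ext s
      rw [hIocSplit]
      simp only [Set.mem_setOf_eq, Set.mem_union]
      tauto
    have hincfin1 : {s | s ∈ Set.Ioc a c ∧ IncreasesThrough V x s}.Finite :=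
      (hfin a c).subset (fun s hs => ⟨inc_mem_SS hs.2, hs.1⟩)
    have hincfin2 : {s | s ∈ Set.Ioc c b ∧ IncreasesThrough V x s}.Finite :=
      (hfin c b).subset (fun s hs => ⟨inc_mem_SS hs.2, hs.1⟩)
    have hdecfin1 : {s | s ∈ Set.Ioc a c ∧ DecreasesThrough V x s}.Finite :=
      (hfin a c).subset (fun s hs => ⟨dec_mem_SS hs.2, hs.1⟩)
    have hdecfin2 : {s | s ∈ Set.Ioc c b ∧ DecreasesThrough V x s}.Finite :=
      (hfin c b).subset (fun s hs => ⟨dec_mem_SS hs.2, hs.1⟩)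
    have hdisj1 : Disjoint {s | s ∈ Set.Ioc a c ∧ IncreasesThrough V x s}
        {s | s ∈ Set.Ioc c b ∧ IncreasesThrough V x s} := by
      rw [Set.disjoint_left]
      rintro s ⟨h1, -⟩ ⟨h2, -⟩
      exact absurd h2.1 (not_lt.2 h1.2)
    have hdisj2 : Disjoint {s | s ∈ Set.Ioc a c ∧ DecreasesThrough V x s}
        {s | s ∈ Set.Ioc c b ∧ DecreasesThrough V x s} := by
      rw [Set.disjoint_left]
      rintro s ⟨h1, -⟩ ⟨h2, -⟩
      exact absurd h2.1 (not_lt.2 h1.2)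
    have hinccard : (({s | s ∈ Set.Ioc a b ∧ IncreasesThrough V x s}).ncard : ℝ) =
        (({s | s ∈ Set.Ioc a c ∧ IncreasesThrough V x s}).ncard : ℝ)
        + (({s | s ∈ Set.Ioc c b ∧ IncreasesThrough V x s}).ncard : ℝ) := by
      rw [hincsplit, Set.ncard_union_eq hdisj1 hincfin1 hincfin2]
      push_cast
      ring
    have hdeccard : (({s | s ∈ Set.Ioc a b ∧ DecreasesThrough V x s}).ncard : ℝ) =
        (({s | s ∈ Set.Ioc a c ∧ DecreasesThrough V x s}).ncard : ℝ)
        + (({s | s ∈ Set.Ioc c b ∧ DecreasesThrough V x s}).ncard : ℝ) := by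
      rw [hdecsplit, Set.ncard_union_eq hdisj2 hdecfin1 hdecfin2]
      push_cast
      ring
    have hSdisj : Disjoint (SS V Vm x ∩ Set.Ioc a c) (SS V Vm x ∩ Set.Ioc c b) := by
      rw [Set.disjoint_left]
      rintro s ⟨-, h1⟩ ⟨-, h2⟩
      exact absurd h2.1 (not_lt.2 h1.2)
    have hSsplit : SS V Vm x ∩ Set.Ioc a b =
        (SS V Vm x ∩ Set.Ioc a c) ∪ (SS V Vm x ∩ Set.Ioc c b) := by
      rw [← Set.inter_union_distrib_left, ← hIocSplit]
    have hsum : ∑ᶠ s ∈ SS V Vm x ∩ Set.Ioc a b, (fI x (V s) - fI x (Vm s)) =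
        (∑ᶠ s ∈ SS V Vm x ∩ Set.Ioc a c, (fI x (V s) - fI x (Vm s)))
        + (fI x (V u) - fI x (Vm u)) := by
      rw [hSsplit, finsum_mem_union hSdisj (hfin a c) (hfin c b), hScb, finsum_mem_singleton]
    rw [hsum, hinccard, hdeccard]
    linarith [IH', hstep]

lemma mem_SS_of_ne {V Vm : ℝ → ℝ} {x : ℝ}
    (hjump : {u : ℝ | 0 < u ∧ V u ≠ Vm u ∧ (x = V u ∨ x = Vm u)} = ∅)
    {s : ℝ} (hs : 0 < s) (h : fI x (V s) ≠ fI x (Vm s)) : s ∈ SS V Vm x := by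
  by_contra hns
  apply h
  have hVs : V s ≠ x := fun hh => hns ⟨hs, Or.inr (Or.inr hh)⟩
  have hVms : Vm s ≠ x := by
    intro hh
    by_cases he : V s = Vm s
    · exact hVs (he.trans hh)
    · have hmem : s ∈ {u : ℝ | 0 < u ∧ V u ≠ Vm u ∧ (x = V u ∨ x = Vm u)} :=
        ⟨hs, he, Or.inr hh.symm⟩
      rw [hjump] at hmem
      exact hmem
  rcases lt_or_gt_of_ne hVs with h1 | h1
  · have h2 : Vm s < x := by
      rcases lt_or_gt_of_ne hVms with h2 | h2
      · exact h2
      · exact absurd ⟨hs, Or.inr (Or.inl ⟨h1, h2⟩)⟩ hns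
    rw [fI_of_lt h1, fI_of_lt h2]
  · have h2 : x < Vm s := by
      rcases lt_or_gt_of_ne hVms with h2 | h2
      · exact absurd ⟨hs, Or.inl ⟨h2, h1⟩⟩ hns
      · exact h2
    rw [fI_of_le h1.le, fI_of_le h2.le]

end Tanaka

/-- deterministic Meyer–Tanaka formula. Let `V` be càdlàg on `[0,∞)` with
finite variation on compacts, `t > 0`, and let `x` be a simple level for `V` with
`x ≠ V 0` and `x ≠ V t`. Then
`1_{[x,∞)}(V t) = 1_{[x,∞)}(V 0) + ℓ^x(t) + Σ_{0<s≤t} (1_{[x,∞)}(V s) − 1_{[x,∞)}(V s−))`,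
the sum having only finitely many nonzero terms. -/
theorem tanaka_formula_Ici
    (V Vm : ℝ → ℝ)
    (hV_rc : ∀ s ∈ Set.Ici (0 : ℝ), ContinuousWithinAt V (Set.Ici s) s)
    (hV_ll : ∀ s ∈ Set.Ioi (0 : ℝ),
      Filter.Tendsto V (nhdsWithin s (Set.Iio s)) (nhds (Vm s)))
    (hV_bv : ∀ T : ℝ, BoundedVariationOn V (Set.Icc 0 T))
    (t : ℝ) (ht : 0 < t)
    (x : ℝ) (hx : SimpleLevel V Vm x) (hx0 : x ≠ V 0) (hxt : x ≠ V t) :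
    {s : ℝ | s ∈ Set.Ioc (0 : ℝ) t ∧
        (Set.Ici x).indicator (fun _ => (1 : ℝ)) (V s) ≠
          (Set.Ici x).indicator (fun _ => (1 : ℝ)) (Vm s)}.Finite ∧
      (Set.Ici x).indicator (fun _ => (1 : ℝ)) (V t) =
        (Set.Ici x).indicator (fun _ => (1 : ℝ)) (V 0) + (signedLocalTime V x t : ℝ) +
          ∑' s : Set.Ioc (0 : ℝ) t,
            ((Set.Ici x).indicator (fun _ => (1 : ℝ)) (V s.1) -
              (Set.Ici x).indicator (fun _ => (1 : ℝ)) (Vm s.1)) := by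

  obtain ⟨hacc, hjump⟩ := hx
  have hacc' : ∀ a : ℝ, 0 ≤ a → ¬ AccPt a (𝓟 (Tanaka.SS V Vm x)) := hacc
  have hfin : ∀ a b : ℝ, (Tanaka.SS V Vm x ∩ Set.Ioc a b).Finite :=
    Tanaka.SS_inter_finite hacc'
  have hVa : V 0 ≠ x := fun h => hx0 h.symm
  have hVt : V t ≠ x := fun h => hxt h.symm
  have key := Tanaka.main hV_rc hV_ll hjump hfin
    ((Tanaka.SS V Vm x ∩ Set.Ioc 0 t).ncard) 0 t le_rfl ht.le hVa hVt rfl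
  have hind : (Set.Ici x).indicator (fun _ => (1 : ℝ)) = Tanaka.fI x := rfl
  constructor
  · apply (hfin 0 t).subset
    rintro s ⟨hs1, hs2⟩
    rw [hind] at hs2
    exact ⟨Tanaka.mem_SS_of_ne hjump hs1.1 hs2, hs1⟩
  · -- convert the tsum into the finsum
    set g : ℝ → ℝ := fun u => Tanaka.fI x (V u) - Tanaka.fI x (Vm u) with hg
    have hsupp : (Function.support ((Set.Ioc (0:ℝ) t).indicator g)).Finite := by
      apply (hfin 0 t).subset
      intro s hs
      rw [Function.mem_support] at hs
      have hsI : s ∈ Set.Ioc (0:ℝ) t := by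
        by_contra hns
        rw [Set.indicator_of_notMem hns] at hs
        exact hs rfl
      rw [Set.indicator_of_mem hsI] at hs
      exact ⟨Tanaka.mem_SS_of_ne hjump hsI.1 (sub_ne_zero.1 hs), hsI⟩
    have htsum : (∑' s : Set.Ioc (0:ℝ) t, g s.1) = ∑ᶠ u ∈ Set.Ioc (0:ℝ) t, g u := by
      rw [tsum_subtype, tsum_eq_finsum hsupp, ← finsum_mem_def]
    have hshrink : (∑ᶠ u ∈ Set.Ioc (0:ℝ) t, g u) =
        ∑ᶠ u ∈ Tanaka.SS V Vm x ∩ Set.Ioc 0 t, g u := by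
      apply finsum_mem_inter_support_eq
      ext s
      simp only [Set.mem_inter_iff, Function.mem_support]
      constructor
      · rintro ⟨h1, h2⟩
        exact ⟨⟨Tanaka.mem_SS_of_ne hjump h1.1 (sub_ne_zero.1 h2), h1⟩, h2⟩
      · rintro ⟨⟨-, h1⟩, h2⟩
        exact ⟨h1, h2⟩
    rw [hind]
    show Tanaka.fI x (V t) = Tanaka.fI x (V 0) + (signedLocalTime V x t : ℝ) +
      ∑' s : Set.Ioc (0:ℝ) t, g s.1
    rw [htsum, hshrink]
    have hcast : (signedLocalTime V x t : ℝ) =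
        ((incSet V x t).ncard : ℝ) - ((decSet V x t).ncard : ℝ) := by
      rw [signedLocalTime]
      push_cast
      ring
    rw [hcast]
    have hinc : incSet V x t = {s | s ∈ Set.Ioc (0:ℝ) t ∧ IncreasesThrough V x s} := rfl
    have hdec : decSet V x t = {s | s ∈ Set.Ioc (0:ℝ) t ∧ DecreasesThrough V x s} := rfl
    rw [hinc, hdec]
    linarith [key]
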